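/- Suppose x* is a fixed point of f with x_u < x* < x_m and suppose γ̄ < 2·b̲. Then x* is locally asymptotically stable: there exists ε > 0 such that for every x ≥ 0 with |x − x*| < ε one has |fⁿ(x) − x*| ≤ |x − x*| for all n ≥ 0 and fⁿ(x) → x* as n → ∞. -/

import Mathlib

/-- A fixed point of f in the open right side (x_u, x_m) is locally
asymptotically stable when γ̄ < 2b̲. -/
theorem right_fixed_point_locally_stable
    (bU bL gU gL r xl xu xm : ℝ) (f : ℝ → ℝ)
    (h1 : bU ≥ gU) (h2 : gU ≥ bL) (h3 : bL ≥ gL) (h4 : gL ≥ 0)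
    (h5 : 0 < bL) (h6 : bL < bU) (h7 : gL < gU)
    (hr : r = (gU - gL) / (bU - bL))
    (hxl : xl = 1 / (gL + 2 * bU * r))
    (hxu : xu = 1 / (gU + 2 * bL * r))
    (hxm : xm = 1 / gU)
    (hf1 : ∀ x : ℝ, 0 ≤ x → x ≤ xl → f x = (1 - gL * x) / (2 * bU))
    (hf2 : ∀ x : ℝ, xl ≤ x → x ≤ xu → f x = r * x)
    (hf3 : ∀ x : ℝ, xu ≤ x → x ≤ xm → f x = (1 - gU * x) / (2 * bL))
    (hf4 : ∀ x : ℝ, xm ≤ x → f x = 0)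
    (hslope : gU < 2 * bL)
    (xs : ℝ) (hfix : f xs = xs) (hxsu : xu < xs) (hxsm : xs < xm) :
    ∃ ε > 0, ∀ x : ℝ, 0 ≤ x → |x - xs| < ε →
      (∀ n : ℕ, |f^[n] x - xs| ≤ |x - xs|) ∧
      Filter.Tendsto (fun n => f^[n] x) Filter.atTop (nhds xs) := by
  have hgU : 0 < gU := lt_of_lt_of_le h5 h2
  set c : ℝ := gU / (2 * bL) with hc
  have hc0 : 0 ≤ c := le_of_lt (div_pos hgU (by linarith))
  have hc1 : c < 1 := (div_lt_one (by linarith)).2 hslope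
  -- fixed point equation
  have hfixeq : f xs = (1 - gU * xs) / (2 * bL) :=
    hf3 xs (le_of_lt hxsu) (le_of_lt hxsm)
  refine ⟨min (xs - xu) (xm - xs), lt_min (by linarith) (by linarith), ?_⟩
  intro x hx0 hxε
  set ε := min (xs - xu) (xm - xs) with hε
  -- key contraction step
  have key : ∀ y : ℝ, |y - xs| < ε → |f y - xs| = c * |y - xs| := by
    intro y hy
    have h1' : |y - xs| < xs - xu := lt_of_lt_of_le hy (min_le_left _ _)
    have h2' : |y - xs| < xm - xs := lt_of_lt_of_le hy (min_le_right _ _)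
    have hyl : xu < y := by
      have := neg_abs_le (y - xs); linarith
    have hyr : y < xm := by
      have := le_abs_self (y - xs); linarith
    have hfy : f y = (1 - gU * y) / (2 * bL) := hf3 y (le_of_lt hyl) (le_of_lt hyr)
    have : f y - xs = -(c * (y - xs)) := by
      rw [hfy]
      have hb : (2 * bL) ≠ 0 := by positivity
      have hxs : 2 * bL * xs = 1 - gU * xs := by
        have := hfixeq.symm.trans hfix
        field_simp at this
        linarith
      field_simp [hc]
      have hcb : 2 * bL * c = gU := by rw [hc]; field_simp
      rw [hcb]
      linarith
    rw [this, abs_neg, abs_mul, abs_of_nonneg hc0]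
  -- induction bound
  have bound : ∀ n : ℕ, |f^[n] x - xs| ≤ c ^ n * |x - xs| := by
    intro n
    induction n with
    | zero => simp
    | succ n ih =>
      have hcn1 : c ^ n ≤ 1 := pow_le_one₀ hc0 (le_of_lt hc1)
      have hlt : |f^[n] x - xs| < ε := by
        calc |f^[n] x - xs| ≤ c ^ n * |x - xs| := ih
          _ ≤ 1 * |x - xs| := by
              apply mul_le_mul_of_nonneg_right hcn1 (abs_nonneg _)
          _ = |x - xs| := one_mul _
          _ < ε := hxε
      rw [Function.iterate_succ_apply', key _ hlt, pow_succ, mul_comm (c^n) c, mul_assoc]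
      exact mul_le_mul_of_nonneg_left ih hc0
  have habs : ∀ n : ℕ, |f^[n] x - xs| ≤ |x - xs| := by
    intro n
    calc |f^[n] x - xs| ≤ c ^ n * |x - xs| := bound n
      _ ≤ 1 * |x - xs| :=
          mul_le_mul_of_nonneg_right (pow_le_one₀ hc0 (le_of_lt hc1)) (abs_nonneg _)
      _ = |x - xs| := one_mul _
  refine ⟨habs, ?_⟩
  have htend0 : Filter.Tendsto (fun n : ℕ => c ^ n * |x - xs|) Filter.atTop (nhds 0) := by
    have := tendsto_pow_atTop_nhds_zero_of_lt_one hc0 hc1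
    simpa using this.mul_const |x - xs|
  have : Filter.Tendsto (fun n : ℕ => |f^[n] x - xs|) Filter.atTop (nhds 0) :=
    squeeze_zero (fun n => abs_nonneg _) bound htend0
  have hdist : Filter.Tendsto (fun n : ℕ => dist (f^[n] x) xs) Filter.atTop (nhds 0) := by
    simpa [Real.dist_eq] using this
  exact tendsto_iff_dist_tendsto_zero.2 hdist
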